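/- arXiv:1311.5317 — 2 statements merged into one kernel-verified Lean document; each statement's English description precedes it below -/
import Mathlib

section
/- Let G = (V,E) be a graph in which every vertex cut of size less than w must contain at least one vertex from a distinguished set A of 'heavy' vertices, and construct G' by replacing each vertex of A by a clique of w vertices and each edge incident to A (or between two vertices of A) by a complete bipartite subgraph between the corresponding vertex sets. Then for any vertex cut S of G', if S contains some but not all vertices of one of the cliques of size w, then S minus those clique vertices is still a vertex cut of G'. -/
/-- `S` is a vertex cut of `H`: removing `S` disconnects the graph. -/
def IsVertexCut {α : Type*} (H : SimpleGraph α) (S : Set α) : Prop :=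
  ¬ (H.induce Sᶜ).Connected

/-- The reduced-vertex-cut argument from the lower-bound construction: blow up
each heavy vertex `a ∈ A` of `G` into a clique of `w` vertices, replacing each
edge by a complete bipartite subgraph (this is the graph `G'` defined via
`fromRel` below). If a vertex cut `S` of `G'` contains some but not all vertices
of one of the `w`-cliques, then `S` minus those clique vertices is still a
vertex cut of `G'`. -/
theorem stmt16 {V : Type*} (G : SimpleGraph V) (A : Set V) (w : ℕ)
    (hcuts : ∀ S₀ : Set V, IsVertexCut G S₀ → S₀.ncard < w → (S₀ ∩ A).Nonempty)
    (π : (↥Aᶜ ⊕ (↥A × Fin w)) → V)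
    (hπ : π = Sum.elim Subtype.val (fun p => (p.1 : V)))
    (G' : SimpleGraph (↥Aᶜ ⊕ (↥A × Fin w)))
    (hG' : G' = SimpleGraph.fromRel (fun x y => G.Adj (π x) (π y) ∨ π x = π y))
    (S : Set (↥Aᶜ ⊕ (↥A × Fin w))) (hS : IsVertexCut G' S)
    (a : ↥A) (K : Set (↥Aᶜ ⊕ (↥A × Fin w)))
    (hK : K = {v | ∃ i : Fin w, v = Sum.inr (a, i)})
    (hsome : (S ∩ K).Nonempty) (hnotall : ¬ K ⊆ S) :
    IsVertexCut G' (S \ K) := by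
  classical
  obtain ⟨k, hkK, hkS⟩ := Set.not_subset.mp hnotall
  have hπK : ∀ x ∈ K, π x = (a : V) := by
    intro x hx
    rw [hK] at hx
    obtain ⟨i, rfl⟩ := hx
    simp [hπ]
  have hclique : ∀ x y, x ∈ K → y ∈ K → x ≠ y → G'.Adj x y := by
    intro x y hx hy hxy
    rw [hG', SimpleGraph.fromRel_adj]
    exact ⟨hxy, Or.inl (Or.inr (by rw [hπK x hx, hπK y hy]))⟩
  have hswap : ∀ x y z, G'.Adj x y → x ∈ K → z ∈ K → z ≠ y → G'.Adj z y := by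
    intro x y z hxy hx hz hzy
    rw [hG', SimpleGraph.fromRel_adj] at hxy ⊢
    refine ⟨hzy, ?_⟩
    have hπzx : π z = π x := (hπK z hz).trans (hπK x hx).symm
    rw [hπzx]
    exact hxy.2
  intro hconn
  apply hS
  have hkSc : k ∈ Sᶜ := hkS
  set T : Set (↥Aᶜ ⊕ (↥A × Fin w)) := (S \ K)ᶜ with hT
  have hF : ∀ x : T, x.1 ∉ K → x.1 ∈ Sᶜ := by
    intro x hx hxS
    exact x.2 ⟨hxS, hx⟩
  set F : T → (Sᶜ : Set _) := fun x =>
    if h : x.1 ∈ K then ⟨k, hkSc⟩ else ⟨x, hF x h⟩ with hFdef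
  have step : ∀ x y : T, (G'.induce T).Adj x y →
      F x = F y ∨ (G'.induce Sᶜ).Adj (F x) (F y) := by
    intro x y h
    have hadj : G'.Adj x.1 y.1 := h
    by_cases hx : x.1 ∈ K <;> by_cases hy : y.1 ∈ K
    · left; simp [hFdef, hx, hy]
    · right
      have hne : k ≠ y.1 := fun he => hy (he ▸ hkK)
      have : G'.Adj k y.1 := hswap x y k hadj hx hkK hne
      simpa [hFdef, hx, hy, SimpleGraph.comap_adj] using this
    · right
      have hne : k ≠ x.1 := fun he => hx (he ▸ hkK)
      have : G'.Adj x.1 k := (hswap y x k hadj.symm hy hkK hne).symm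
      simpa [hFdef, hx, hy, SimpleGraph.comap_adj] using this
    · right
      simpa [hFdef, hx, hy, SimpleGraph.comap_adj] using hadj
  have key : ∀ x y : T, (G'.induce T).Reachable x y →
      (G'.induce Sᶜ).Reachable (F x) (F y) := by
    intro x y hr
    obtain ⟨p⟩ := hr
    induction p with
    | nil => exact SimpleGraph.Reachable.refl _
    | cons h p ih =>
      rcases step _ _ h with heq | hadj
      · exact heq ▸ ih
      · exact hadj.reachable.trans ih
  have hι : ∀ u : (Sᶜ : Set _), u.1 ∈ T := by
    intro u hu
    exact u.2 hu.1
  have hback : ∀ u : (Sᶜ : Set _), (G'.induce Sᶜ).Reachable u (F ⟨u, hι u⟩) := by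
    intro u
    by_cases hu : u.1 ∈ K
    · by_cases heq : u.1 = k
      · have : F ⟨u, hι u⟩ = u := by
          simp only [hFdef, hu, dif_pos]
          exact Subtype.ext heq.symm
        rw [this]
      · have hadj : (G'.induce Sᶜ).Adj u ⟨k, hkSc⟩ := by
          have : G'.Adj u.1 k := hclique _ _ hu hkK heq
          simpa [SimpleGraph.comap_adj] using this
        have : F ⟨u, hι u⟩ = ⟨k, hkSc⟩ := by simp [hFdef, hu]
        rw [this]
        exact hadj.reachable
    · have : F ⟨u, hι u⟩ = u := by
        simp only [hFdef, hu, dif_neg, not_false_iff]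
      rw [this]
  haveI : Nonempty (Sᶜ : Set _) := ⟨⟨k, hkSc⟩⟩
  refine SimpleGraph.Connected.mk fun u v => ?_
  have h1 := hconn.preconnected ⟨u, hι u⟩ ⟨v, hι v⟩
  have h2 := key _ _ h1
  exact ((hback u).trans h2).trans (hback v).symm
end

section
/- In the lower-bound graph H(X,Y) with parameters h ≥ 2, ℓ ≥ 1, weight w > 4: if X ∩ Y = {z} for a single element z ∈ [h], then the set {a, b, u_z, v_z} is a vertex cut of size 4, and every vertex cut of H(X,Y) that does not contain all four of these vertices contains a vertex of weight w; consequently the minimum (weighted) vertex cut of H(X,Y) has size exactly 4. -/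
/-- Vertices of the lower-bound graph `H(X,Y)`: heavy path vertices `(p,q)` with
`p ∈ {0,…,h}`, `q ∈ [2ℓ]`; the two special vertices `a` (encoded `true`) and `b`
(encoded `false`); and the light vertices `u_x` for `x ∈ X` and `v_y` for `y ∈ Y`. -/
abbrev LBVtx (h ℓ : ℕ) (X Y : Finset (Fin h)) : Type :=
  (Fin (h + 1) × Fin (2 * ℓ)) ⊕ (Bool ⊕ (↥X ⊕ ↥Y))

/-- The edge relation of `H(X,Y)` (to be symmetrized by `SimpleGraph.fromRel`):
path edges `(p,q)–(p,q+1)`; for `x ∈ X`, `u_x` joined to `(0,1)` and `(x,1)`;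
for `x ∉ X`, `(0,1)–(x,1)` directly; symmetrically for `Y` at column `2ℓ`;
`a–b`; `a` joined to all `u_x` and all `(p,q)` with `q` in the left half;
`b` joined to all `v_y` and all `(p,q)` in the right half. (Columns are
0-indexed: the first column is `0` and the last is `2ℓ−1`.) -/
def LBRel (h ℓ : ℕ) (X Y : Finset (Fin h)) :
    LBVtx h ℓ X Y → LBVtx h ℓ X Y → Prop :=
  fun u v =>
  match u, v with
  | .inl (p, q), .inl (p', q') =>
      (p = p' ∧ (q' : ℕ) = (q : ℕ) + 1)
      ∨ ((p : ℕ) = 0 ∧ (q : ℕ) = 0 ∧ (q' : ℕ) = 0 ∧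
          ∃ x : Fin h, (p' : ℕ) = (x : ℕ) + 1 ∧ x ∉ X)
      ∨ ((p : ℕ) = 0 ∧ (q : ℕ) = 2 * ℓ - 1 ∧ (q' : ℕ) = 2 * ℓ - 1 ∧
          ∃ y : Fin h, (p' : ℕ) = (y : ℕ) + 1 ∧ y ∉ Y)
  | .inr (.inl ab), .inr (.inl ab') => ab = true ∧ ab' = false
  | .inr (.inl ab), .inl (_, q) =>
      (ab = true ∧ (q : ℕ) < ℓ) ∨ (ab = false ∧ ℓ ≤ (q : ℕ))
  | .inr (.inl ab), .inr (.inr (.inl _)) => ab = true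
  | .inr (.inl ab), .inr (.inr (.inr _)) => ab = false
  | .inr (.inr (.inl ux)), .inl (p, q) =>
      (q : ℕ) = 0 ∧ ((p : ℕ) = 0 ∨ (p : ℕ) = ((ux : Fin h) : ℕ) + 1)
  | .inr (.inr (.inr vy)), .inl (p, q) =>
      (q : ℕ) = 2 * ℓ - 1 ∧ ((p : ℕ) = 0 ∨ (p : ℕ) = ((vy : Fin h) : ℕ) + 1)
  | _, _ => False

/-- The lower-bound graph `H(X,Y)`. -/
def LBGraph (h ℓ : ℕ) (X Y : Finset (Fin h)) : SimpleGraph (LBVtx h ℓ X Y) :=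
  SimpleGraph.fromRel (LBRel h ℓ X Y)

/-- Vertex weights: heavy path vertices have weight `w`, all others weight `1`. -/
def LBwt (h ℓ w : ℕ) (X Y : Finset (Fin h)) : LBVtx h ℓ X Y → ℕ :=
  fun v => match v with
  | .inl _ => w
  | .inr _ => 1

section Conn

variable {h ℓ : ℕ} {X Y : Finset (Fin h)}

lemma lb_conn (hh : 2 ≤ h) (hℓ : 1 ≤ ℓ) (z : Fin h)
    (hzX : z ∈ X) (hzY : z ∈ Y) (hXY : X ∩ Y = {z})
    (T : Set (LBVtx h ℓ X Y))
    (hT : ∀ p q, Sum.inl (p, q) ∈ T)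
    (hz : (Sum.inr (Sum.inl true) : LBVtx h ℓ X Y) ∈ T ∨
          (Sum.inr (Sum.inl false) : LBVtx h ℓ X Y) ∈ T ∨
          (Sum.inr (Sum.inr (Sum.inl ⟨z, hzX⟩)) : LBVtx h ℓ X Y) ∈ T ∨
          (Sum.inr (Sum.inr (Sum.inr ⟨z, hzY⟩)) : LBVtx h ℓ X Y) ∈ T) :
    ((LBGraph h ℓ X Y).induce T).Connected := by
  set G := LBGraph h ℓ X Y with hG
  set G' := G.induce T with hG'
  have hl2 : 0 < 2 * ℓ := by omega
  set c0 : Fin (2 * ℓ) := ⟨0, hl2⟩ with hc0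
  set c1 : Fin (2 * ℓ) := ⟨2 * ℓ - 1, by omega⟩ with hc1
  set p0 : Fin (h + 1) := ⟨0, by omega⟩ with hp0
  -- turn a graph adjacency into reachability in the induced graph
  have adjR : ∀ (u v : LBVtx h ℓ X Y) (hu : u ∈ T) (hv : v ∈ T),
      G.Adj u v → G'.Reachable ⟨u, hu⟩ ⟨v, hv⟩ := by
    intro u v hu hv hadj
    exact SimpleGraph.Adj.reachable (by rw [hG']; exact hadj)
  -- row reachability
  have rowAux : ∀ (p : Fin (h + 1)) (n : ℕ) (hn : n < 2 * ℓ),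
      G'.Reachable ⟨Sum.inl (p, c0), hT p c0⟩ ⟨Sum.inl (p, ⟨n, hn⟩), hT p _⟩ := by
    intro p n
    induction n with
    | zero => intro hn; exact SimpleGraph.Reachable.refl _
    | succ k ih =>
      intro hn
      have hk : k < 2 * ℓ := by omega
      refine (ih hk).trans (adjR _ _ _ _ ?_)
      refine ⟨?_, Or.inl (Or.inl ⟨rfl, rfl⟩)⟩
      simp only [ne_eq, Sum.inl.injEq, Prod.mk.injEq, Fin.mk.injEq]
      omega
  have rowR : ∀ (p : Fin (h + 1)) (q q' : Fin (2 * ℓ)),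
      G'.Reachable ⟨Sum.inl (p, q), hT p q⟩ ⟨Sum.inl (p, q'), hT p q'⟩ := by
    intro p q q'
    exact (rowAux p q.1 q.2).symm.trans (rowAux p q'.1 q'.2)
  set hub : ↥T := ⟨Sum.inl (p0, c0), hT p0 c0⟩ with hhub
  -- reaching the hub from the left end of each row
  have rowHub : ∀ p : Fin (h + 1), G'.Reachable ⟨Sum.inl (p, c0), hT p c0⟩ hub := by
    intro p
    by_cases hp : (p : ℕ) = 0
    · have : p = p0 := Fin.ext hp
      subst this; exact SimpleGraph.Reachable.refl _
    · set x : Fin h := ⟨(p : ℕ) - 1, by omega⟩ with hx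
      have hpx : (p : ℕ) = (x : ℕ) + 1 := by simp [hx]; omega
      have hpne0 : p ≠ p0 := fun e => hp (by rw [e])
      by_cases hxX : x ∈ X
      · by_cases hxz : x = z
        · -- row z+1 : use one of the four surviving special vertices
          subst hxz
          rcases hz with ha | hb | hu | hv
          · -- via a
            refine (adjR _ _ (hT p c0) ha ?_).trans (adjR _ _ ha (hT p0 c0) ?_)
            · exact ⟨by simp, Or.inr (Or.inl ⟨rfl, by simp [hc0]; omega⟩)⟩
            · exact ⟨by simp, Or.inl (Or.inl ⟨rfl, by simp [hc0]; omega⟩)⟩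
          · -- via b at the right end
            refine (rowR p c0 c1).trans ?_
            refine ((adjR _ _ (hT p c1) hb ?_).trans (adjR _ _ hb (hT p0 c1) ?_)).trans
              (rowR p0 c1 c0)
            · exact ⟨by simp, Or.inr (Or.inr ⟨rfl, by simp [hc1]; omega⟩)⟩
            · exact ⟨by simp, Or.inl (Or.inr ⟨rfl, by simp [hc1]; omega⟩)⟩
          · -- via u_z
            refine (adjR _ _ (hT p c0) hu ?_).trans (adjR _ _ hu (hT p0 c0) ?_)
            · exact ⟨by simp, Or.inr ⟨rfl, Or.inr (by simpa using hpx)⟩⟩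
            · exact ⟨by simp, Or.inl ⟨rfl, Or.inl rfl⟩⟩
          · -- via v_z
            refine (rowR p c0 c1).trans ?_
            refine ((adjR _ _ (hT p c1) hv ?_).trans (adjR _ _ hv (hT p0 c1) ?_)).trans
              (rowR p0 c1 c0)
            · exact ⟨by simp, Or.inr ⟨rfl, Or.inr (by simpa using hpx)⟩⟩
            · exact ⟨by simp, Or.inl ⟨rfl, Or.inl rfl⟩⟩
        · -- x ∈ X, x ≠ z, so x ∉ Y : direct edge at right end
          have hxY : x ∉ Y := by
            intro hxy
            exact hxz (by
              have : x ∈ X ∩ Y := Finset.mem_inter.mpr ⟨hxX, hxy⟩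
              rwa [hXY, Finset.mem_singleton] at this)
          refine (rowR p c0 c1).trans ((adjR _ _ (hT p c1) (hT p0 c1) ?_).trans
            (rowR p0 c1 c0))
          refine ⟨?_, Or.inr (Or.inr (Or.inr ⟨rfl, rfl, rfl, x, hpx, hxY⟩))⟩
          simp only [ne_eq, Sum.inl.injEq, Prod.mk.injEq]
          exact fun ⟨e, _⟩ => hpne0 e
      · -- x ∉ X : direct edge at left end
        refine adjR _ _ (hT p c0) (hT p0 c0) ?_
        refine ⟨?_, Or.inr (Or.inr (Or.inl ⟨rfl, rfl, rfl, x, hpx, hxX⟩))⟩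
        simp only [ne_eq, Sum.inl.injEq, Prod.mk.injEq]
        exact fun ⟨e, _⟩ => hpne0 e
  -- every vertex reaches the hub
  have allHub : ∀ v : ↥T, G'.Reachable v hub := by
    rintro ⟨v, hv⟩
    match v with
    | .inl (p, q) => exact (rowR p q c0).trans (rowHub p)
    | .inr (.inl true) =>
      exact adjR _ _ hv (hT p0 c0) ⟨by simp, Or.inl (Or.inl ⟨rfl, by simp [hc0]; omega⟩)⟩
    | .inr (.inl false) =>
      exact (adjR _ _ hv (hT p0 c1)
        ⟨by simp, Or.inl (Or.inr ⟨rfl, by simp [hc1]; omega⟩)⟩).trans (rowR p0 c1 c0)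
    | .inr (.inr (.inl ux)) =>
      exact adjR _ _ hv (hT p0 c0) ⟨by simp, Or.inl ⟨rfl, Or.inl rfl⟩⟩
    | .inr (.inr (.inr vy)) =>
      exact (adjR _ _ hv (hT p0 c1)
        ⟨by simp, Or.inl ⟨rfl, Or.inl rfl⟩⟩).trans (rowR p0 c1 c0)
  rw [SimpleGraph.connected_iff_exists_forall_reachable]
  exact ⟨hub, fun v => (allHub v).symm⟩

end Conn

section NotConn

variable {h ℓ : ℕ} {X Y : Finset (Fin h)}

lemma lb_notconn (hh : 2 ≤ h) (hℓ : 1 ≤ ℓ) (z : Fin h)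
    (hzX : z ∈ X) (hzY : z ∈ Y) :
    ¬ ((LBGraph h ℓ X Y).induce
        (↑({Sum.inr (Sum.inl true), Sum.inr (Sum.inl false),
          Sum.inr (Sum.inr (Sum.inl ⟨z, hzX⟩)), Sum.inr (Sum.inr (Sum.inr ⟨z, hzY⟩))} :
          Finset (LBVtx h ℓ X Y)))ᶜ).Connected := by
  set cut : Finset (LBVtx h ℓ X Y) :=
    {Sum.inr (Sum.inl true), Sum.inr (Sum.inl false),
     Sum.inr (Sum.inr (Sum.inl ⟨z, hzX⟩)), Sum.inr (Sum.inr (Sum.inr ⟨z, hzY⟩))} with hcut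
  set G := LBGraph h ℓ X Y with hG
  set T : Set (LBVtx h ℓ X Y) := (↑cut)ᶜ with hTdef
  set pz : Fin (h + 1) := ⟨(z : ℕ) + 1, by omega⟩ with hpz
  have hl2 : 0 < 2 * ℓ := by omega
  have hmem : ∀ (p : Fin (h + 1)) (q : Fin (2 * ℓ)),
      (Sum.inl (p, q) : LBVtx h ℓ X Y) ∈ T := by
    intro p q
    simp [hTdef, hcut]
  have closed : ∀ (q : Fin (2 * ℓ)) (v : LBVtx h ℓ X Y),
      G.Adj (Sum.inl (pz, q)) v → v ∉ cut → ∃ q', v = Sum.inl (pz, q') := by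
    intro q v hadj hv
    obtain ⟨hne, hr⟩ := hadj
    match v with
    | .inl (p', q') =>
      rcases hr with hr | hr
      · replace hr :
          (pz = p' ∧ (q' : ℕ) = (q : ℕ) + 1)
          ∨ ((pz : ℕ) = 0 ∧ (q : ℕ) = 0 ∧ (q' : ℕ) = 0 ∧
              ∃ x : Fin h, (p' : ℕ) = (x : ℕ) + 1 ∧ x ∉ X)
          ∨ ((pz : ℕ) = 0 ∧ (q : ℕ) = 2 * ℓ - 1 ∧ (q' : ℕ) = 2 * ℓ - 1 ∧
              ∃ y : Fin h, (p' : ℕ) = (y : ℕ) + 1 ∧ y ∉ Y) := hr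
        rcases hr with ⟨hpp, -⟩ | ⟨h0, -⟩ | ⟨h0, -⟩
        · exact ⟨q', by rw [hpp]⟩
        · exact absurd h0 (by simp [hpz])
        · exact absurd h0 (by simp [hpz])
      · replace hr :
          (p' = pz ∧ (q : ℕ) = (q' : ℕ) + 1)
          ∨ ((p' : ℕ) = 0 ∧ (q' : ℕ) = 0 ∧ (q : ℕ) = 0 ∧
              ∃ x : Fin h, (pz : ℕ) = (x : ℕ) + 1 ∧ x ∉ X)
          ∨ ((p' : ℕ) = 0 ∧ (q' : ℕ) = 2 * ℓ - 1 ∧ (q : ℕ) = 2 * ℓ - 1 ∧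
              ∃ y : Fin h, (pz : ℕ) = (y : ℕ) + 1 ∧ y ∉ Y) := hr
        rcases hr with ⟨hpp, -⟩ | ⟨-, -, -, x, hx, hxX⟩ | ⟨-, -, -, y, hy, hyY⟩
        · exact ⟨q', by rw [hpp]⟩
        · exact absurd hzX (by
            have : x = z := Fin.ext (by simp [hpz] at hx; omega)
            rwa [this] at hxX)
        · exact absurd hzY (by
            have : y = z := Fin.ext (by simp [hpz] at hy; omega)
            rwa [this] at hyY)
    | .inr (.inl ab) =>
      rcases hr with hr | hr
      · exact hr.elim
      · replace hr : (ab = true ∧ (q : ℕ) < ℓ) ∨ (ab = false ∧ ℓ ≤ (q : ℕ)) := hr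
        exfalso; apply hv
        rcases hr with ⟨rfl, -⟩ | ⟨rfl, -⟩ <;> simp [hcut]
    | .inr (.inr (.inl ux)) =>
      rcases hr with hr | hr
      · exact hr.elim
      · replace hr :
          (q : ℕ) = 0 ∧ ((pz : ℕ) = 0 ∨ (pz : ℕ) = ((ux : Fin h) : ℕ) + 1) := hr
        exfalso; apply hv
        rcases hr.2 with h0 | hux
        · simp [hpz] at h0
        · have : (ux : Fin h) = z := Fin.ext (by simp [hpz] at hux; omega)
          have : ux = (⟨z, hzX⟩ : ↥X) := Subtype.ext this
          simp [hcut, this]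
    | .inr (.inr (.inr vy)) =>
      rcases hr with hr | hr
      · exact hr.elim
      · replace hr :
          (q : ℕ) = 2 * ℓ - 1 ∧ ((pz : ℕ) = 0 ∨ (pz : ℕ) = ((vy : Fin h) : ℕ) + 1) := hr
        exfalso; apply hv
        rcases hr.2 with h0 | hvy
        · simp [hpz] at h0
        · have : (vy : Fin h) = z := Fin.ext (by simp [hpz] at hvy; omega)
          have : vy = (⟨z, hzY⟩ : ↥Y) := Subtype.ext this
          simp [hcut, this]
  have inv : ∀ (a b : ↥T), (G.induce T).Walk a b →
      (∃ q, a.1 = Sum.inl (pz, q)) → ∃ q, b.1 = Sum.inl (pz, q) := by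
    intro a b wk
    induction wk with
    | nil => exact id
    | @cons a c b hadj p ih =>
      rintro ⟨q, hq⟩
      apply ih
      have hadj' : G.Adj a.1 c.1 := by simpa using hadj
      rw [hq] at hadj'
      exact closed q _ hadj' (fun hc => c.2 (Finset.mem_coe.mpr hc))
  intro hcon
  obtain ⟨wk⟩ := hcon.preconnected
    ⟨Sum.inl (pz, ⟨0, hl2⟩), hmem _ _⟩ ⟨Sum.inl (⟨0, by omega⟩, ⟨0, hl2⟩), hmem _ _⟩
  obtain ⟨q, hq⟩ := inv _ _ wk ⟨_, rfl⟩
  simp only [Sum.inl.injEq, Prod.mk.injEq, Fin.ext_iff, hpz] at hq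
  omega

end NotConn

/-- For `X ∩ Y = {z}`, in `H(X,Y)` the set `{a, b, u_z, v_z}` is a vertex cut of
(weighted) size 4; every vertex cut not containing all four of these vertices
contains a vertex of weight `w`; and consequently the minimum weighted vertex
cut size of `H(X,Y)` is exactly `4`. -/
theorem stmt17 (h ℓ w : ℕ) (hh : 2 ≤ h) (hℓ : 1 ≤ ℓ) (hw : 4 < w)
    (X Y : Finset (Fin h)) (z : Fin h)
    (hzX : z ∈ X) (hzY : z ∈ Y) (hXY : X ∩ Y = {z}) :
    letI va : LBVtx h ℓ X Y := Sum.inr (Sum.inl true)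
    letI vb : LBVtx h ℓ X Y := Sum.inr (Sum.inl false)
    letI uz : LBVtx h ℓ X Y := Sum.inr (Sum.inr (Sum.inl ⟨z, hzX⟩))
    letI vz : LBVtx h ℓ X Y := Sum.inr (Sum.inr (Sum.inr ⟨z, hzY⟩))
    letI cut : Finset (LBVtx h ℓ X Y) := {va, vb, uz, vz}
    IsVertexCut (LBGraph h ℓ X Y) ↑cut ∧
    (∑ v ∈ cut, LBwt h ℓ w X Y v) = 4 ∧
    (∀ S : Finset (LBVtx h ℓ X Y), IsVertexCut (LBGraph h ℓ X Y) ↑S →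
      ¬ cut ⊆ S → ∃ v ∈ S, LBwt h ℓ w X Y v = w) ∧
    IsLeast {n : ℕ | ∃ S : Finset (LBVtx h ℓ X Y),
      IsVertexCut (LBGraph h ℓ X Y) ↑S ∧ (∑ v ∈ S, LBwt h ℓ w X Y v) = n} 4 := by
  have hne1 : (0:ℕ) < 2 * ℓ := by omega
  set cutF : Finset (LBVtx h ℓ X Y) :=
    {Sum.inr (Sum.inl true), Sum.inr (Sum.inl false),
     Sum.inr (Sum.inr (Sum.inl ⟨z, hzX⟩)), Sum.inr (Sum.inr (Sum.inr ⟨z, hzY⟩))} with hcutF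
  have part1 : IsVertexCut (LBGraph h ℓ X Y) ↑cutF := lb_notconn hh hℓ z hzX hzY
  have hsum : ∑ v ∈ cutF, LBwt h ℓ w X Y v = 4 := by
    rw [hcutF, Finset.sum_insert (by simp), Finset.sum_insert (by simp),
      Finset.sum_insert (by simp), Finset.sum_singleton]
    rfl
  have part3 : ∀ S : Finset (LBVtx h ℓ X Y), IsVertexCut (LBGraph h ℓ X Y) ↑S →
      ¬ cutF ⊆ S → ∃ v ∈ S, LBwt h ℓ w X Y v = w := by
    intro S hS hsub
    by_contra hno
    push_neg at hno
    have hT : ∀ p q, (Sum.inl (p, q) : LBVtx h ℓ X Y) ∈ (↑S : Set _)ᶜ := by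
      intro p q
      simp only [Set.mem_compl_iff, Finset.mem_coe]
      intro hmem
      exact hno _ hmem rfl
    obtain ⟨c, hc, hcS⟩ := Finset.not_subset.mp hsub
    have hcS' : c ∈ (↑S : Set _)ᶜ := by simpa using hcS
    have hz' : (Sum.inr (Sum.inl true) : LBVtx h ℓ X Y) ∈ (↑S : Set _)ᶜ ∨
        (Sum.inr (Sum.inl false) : LBVtx h ℓ X Y) ∈ (↑S : Set _)ᶜ ∨
        (Sum.inr (Sum.inr (Sum.inl ⟨z, hzX⟩)) : LBVtx h ℓ X Y) ∈ (↑S : Set _)ᶜ ∨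
        (Sum.inr (Sum.inr (Sum.inr ⟨z, hzY⟩)) : LBVtx h ℓ X Y) ∈ (↑S : Set _)ᶜ := by
      rw [hcutF] at hc
      simp only [Finset.mem_insert, Finset.mem_singleton] at hc
      rcases hc with rfl | rfl | rfl | rfl
      · exact Or.inl hcS'
      · exact Or.inr (Or.inl hcS')
      · exact Or.inr (Or.inr (Or.inl hcS'))
      · exact Or.inr (Or.inr (Or.inr hcS'))
    exact hS (lb_conn hh hℓ z hzX hzY hXY _ hT hz')
  refine ⟨part1, hsum, part3, ⟨cutF, part1, hsum⟩, ?_⟩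
  rintro n ⟨S, hS, rfl⟩
  by_cases hsub : cutF ⊆ S
  · have hle := Finset.sum_le_sum_of_subset (f := LBwt h ℓ w X Y) hsub
    omega
  · obtain ⟨v, hvS, hvw⟩ := part3 S hS hsub
    have hle := Finset.single_le_sum (f := LBwt h ℓ w X Y) (fun i _ => Nat.zero_le _) hvS
    omega
end
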